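/- Let 0 ≤ j1 < j2 be integers, d := j2 − j1, and let (s1, s2) (with s1 < s2) be the first crossing by S of (j1, j2), which is almost surely defined. Then the law of the increment sequence (S(s1+1) − S(s1), S(s1+2) − S(s1+1), ..., S(s2) − S(s2−1)), as a random element of the set of finite sequences with values in {−1,+1}, equals the conditional law of (S(1) − S(0), ..., S(κ_d) − S(κ_d − 1)) given the event E_{cross d} := {κ_d < κ_0}. -/

import Mathlib

open MeasureTheory ProbabilityTheory

/-- `(t1, t2)` is a crossing by `T` of the ordered pair `(x1, x2)`. -/
def IsCrossing {α : Type*} [LinearOrder α] (T : α → ℤ) (t1 t2 : α) (x1 x2 : ℤ) : Prop :=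
  x1 ≠ x2 ∧ T t1 = x1 ∧ T t2 = x2 ∧
    ∀ t, min t1 t2 < t → t < max t1 t2 → min x1 x2 < T t ∧ T t < max x1 x2

/-- `(t1, t2)` is the `(j+1)`-th crossing (in order of occurrence, among crossings with
times `≥ a`) by `T` of `(x1, x2)`. -/
def IsNthCrossingAfter {α : Type*} [LinearOrder α] (T : α → ℤ) (a : α) (x1 x2 : ℤ) :
    ℕ → α → α → Prop
  | 0, t1, t2 =>
      IsCrossing T t1 t2 x1 x2 ∧ a ≤ min t1 t2 ∧
        ∀ u1 u2, IsCrossing T u1 u2 x1 x2 → a ≤ min u1 u2 → min t1 t2 ≤ min u1 u2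
  | j + 1, t1, t2 =>
      ∃ s1 s2, IsNthCrossingAfter T a x1 x2 j s1 s2 ∧
        IsCrossing T t1 t2 x1 x2 ∧ max s1 s2 ≤ min t1 t2 ∧
        ∀ u1 u2, IsCrossing T u1 u2 x1 x2 → max s1 s2 ≤ min u1 u2 → min t1 t2 ≤ min u1 u2

/-- First passage time of the path `S` at the point `x` (time `≥ 0`). -/
noncomputable def firstHit (S : ℕ → ℤ) (x : ℤ) : ℕ := sInf {t : ℕ | S t = x}

/-- First return time of the path `S` to `0` (time `> 0`). -/
noncomputable def firstReturn (S : ℕ → ℤ) : ℕ := sInf {t : ℕ | 0 < t ∧ S t = 0}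

/-! ### Auxiliary path combinatorics -/

/-- partial sum of first `k` entries -/
def fcPS (w : List ℤ) (k : ℕ) : ℤ := (w.take k).sum

lemma fcPS_zero (w : List ℤ) : fcPS w 0 = 0 := rfl

lemma fcPS_succ (w : List ℤ) {k : ℕ} (h : k < w.length) :
    fcPS w (k + 1) = fcPS w k + w.getD k 0 := by
  rw [fcPS, fcPS, List.sum_take_succ _ _ h, List.getD_eq_getElem _ _ h]

lemma fcPS_length (w : List ℤ) : fcPS w w.length = w.sum := by simp [fcPS]

lemma fcPS_append_left (u L : List ℤ) {k : ℕ} (h : k ≤ u.length) :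
    fcPS (u ++ L) k = fcPS u k := by
  rw [fcPS, fcPS, List.take_append_of_le_length h]

lemma fcPS_append_right (u L : List ℤ) (m : ℕ) :
    fcPS (u ++ L) (u.length + m) = u.sum + fcPS L m := by
  rw [fcPS, fcPS, List.take_append, List.sum_append, List.take_of_length_le (by omega),
    Nat.add_sub_cancel_left]

def fcSign (w : List ℤ) : Prop := ∀ x ∈ w, x = 1 ∨ x = -1

lemma fcSign_append {u L : List ℤ} (hu : fcSign u) (hL : fcSign L) : fcSign (u ++ L) := by
  intro x hx; rcases List.mem_append.1 hx with h | h
  · exact hu x h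
  · exact hL x h

def fcU (j1 j2 : ℤ) (u : List ℤ) : Prop :=
  fcSign u ∧ u.sum = j1 ∧ ∀ k ≤ u.length, fcPS u k < j2

def fcAdm (d : ℤ) (L : List ℤ) : Prop :=
  fcSign L ∧ L ≠ [] ∧ L.sum = d ∧ ∀ k, 0 < k → k < L.length → 0 < fcPS L k ∧ fcPS L k < d

def fcV (d : ℤ) (v : List ℤ) : Prop :=
  fcSign v ∧ v ≠ [] ∧ v.sum = -d ∧ ∀ k < v.length, -d < fcPS v k

/-- the path runs through the increments of `w` starting at time `a` -/
def fcRuns (T : ℕ → ℤ) (a : ℕ) (w : List ℤ) : Prop :=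
  ∀ j < w.length, T (a + j + 1) - T (a + j) = w.getD j 0

lemma fcRuns_val {T : ℕ → ℤ} {a : ℕ} {w : List ℤ} (h : fcRuns T a w) :
    ∀ k ≤ w.length, T (a + k) = T a + fcPS w k := by
  intro k hk
  induction k with
  | zero => simp [fcPS_zero]
  | succ k ih =>
    have hk' : k < w.length := hk
    have h1 := h k hk'
    have h2 := ih hk'.le
    rw [fcPS_succ _ hk']
    show T (a + k + 1) = _
    omega

lemma fcRuns_append {T : ℕ → ℤ} {a : ℕ} {u L : List ℤ} :
    fcRuns T a (u ++ L) ↔ fcRuns T a u ∧ fcRuns T (a + u.length) L := by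
  constructor
  · intro h
    refine ⟨fun j hj => ?_, fun j hj => ?_⟩
    · have := h j (by simp; omega)
      rwa [List.getD_append _ _ _ _ hj] at this
    · have := h (u.length + j) (by simp; omega)
      rw [List.getD_append_right _ _ _ _ (by omega)] at this
      have e1 : a + (u.length + j) = a + u.length + j := by omega
      have e2 : u.length + j - u.length = j := by omega
      rw [e1, e2] at this
      exact this
  · rintro ⟨h1, h2⟩ j hj
    rcases lt_or_ge j u.length with hc | hc
    · rw [List.getD_append _ _ _ _ hc]; exact h1 j hc
    · rw [List.getD_append_right _ _ _ _ hc]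
      have := h2 (j - u.length) (by simp at hj; omega)
      have e1 : a + u.length + (j - u.length) = a + j := by omega
      rw [e1] at this
      exact this

def fcGood (T : ℕ → ℤ) : Prop := ∀ k, T (k + 1) = T k + 1 ∨ T (k + 1) = T k - 1

lemma fcIvt_up {T : ℕ → ℤ} (hs : fcGood T) {a b : ℕ} (hab : a ≤ b) {c : ℤ}
    (ha : T a ≤ c) (hb : c ≤ T b) : ∃ t, a ≤ t ∧ t ≤ b ∧ T t = c := by
  induction b, hab using Nat.le_induction with
  | base => exact ⟨a, le_rfl, le_rfl, le_antisymm ha hb⟩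
  | succ b hab ih =>
    by_cases h : c ≤ T b
    · obtain ⟨t, h1, h2, h3⟩ := ih h
      exact ⟨t, h1, h2.trans (Nat.le_succ b), h3⟩
    · push_neg at h
      have := hs b
      exact ⟨b + 1, Nat.le_succ_of_le hab, le_rfl, by omega⟩

lemma fcIvt_down {T : ℕ → ℤ} (hs : fcGood T) {a b : ℕ} (hab : a ≤ b) {c : ℤ}
    (ha : c ≤ T a) (hb : T b ≤ c) : ∃ t, a ≤ t ∧ t ≤ b ∧ T t = c := by
  induction b, hab using Nat.le_induction with
  | base => exact ⟨a, le_rfl, le_rfl, le_antisymm hb ha⟩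
  | succ b hab ih =>
    by_cases h : T b ≤ c
    · obtain ⟨t, h1, h2, h3⟩ := ih h
      exact ⟨t, h1, h2.trans (Nat.le_succ b), h3⟩
    · push_neg at h
      have := hs b
      exact ⟨b + 1, Nat.le_succ_of_le hab, le_rfl, by omega⟩

/-- the increment word of the path on `[a, a+n)` -/
def fcWord (T : ℕ → ℤ) (a n : ℕ) : List ℤ :=
  (List.range n).map fun j => T (a + j + 1) - T (a + j)

@[simp] lemma fcWord_length (T : ℕ → ℤ) (a n : ℕ) : (fcWord T a n).length = n := by
  simp [fcWord]

lemma fcWord_getD (T : ℕ → ℤ) (a n : ℕ) {j : ℕ} (hj : j < n) :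
    (fcWord T a n).getD j 0 = T (a + j + 1) - T (a + j) := by
  rw [List.getD_eq_getElem _ _ (by simpa using hj)]
  simp [fcWord]

lemma fcRuns_fcWord (T : ℕ → ℤ) (a n : ℕ) : fcRuns T a (fcWord T a n) := by
  intro j hj
  rw [fcWord_getD T a n (by simpa using hj)]

lemma fcWord_eq_of_runs {T : ℕ → ℤ} {a : ℕ} {w : List ℤ} (h : fcRuns T a w) :
    fcWord T a w.length = w := by
  apply List.ext_getElem (by simp)
  intro j hj hj'
  have := h j hj'
  rw [List.getD_eq_getElem _ _ hj'] at this
  simpa [fcWord] using this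

lemma fcWord_eq_iff {T : ℕ → ℤ} {a : ℕ} {w : List ℤ} :
    fcWord T a w.length = w ↔ fcRuns T a w := by
  constructor
  · intro h j hj
    conv_rhs => rw [← h]
    rw [fcWord_getD T a w.length hj]
  · exact fcWord_eq_of_runs

lemma fcRuns_unique {T : ℕ → ℤ} {a : ℕ} {w w' : List ℤ} (h : fcRuns T a w)
    (h' : fcRuns T a w') (hl : w.length = w'.length) : w = w' := by
  rw [← fcWord_eq_of_runs h, hl, fcWord_eq_of_runs h']

lemma fcWord_append (T : ℕ → ℤ) (a m n : ℕ) :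
    fcWord T a (m + n) = fcWord T a m ++ fcWord T (a + m) n := by
  rw [fcWord, List.range_add, List.map_append]
  congr 1
  rw [List.map_map, fcWord]
  apply List.map_congr_left
  intro j _
  simp only [Function.comp_apply]
  congr 2 <;> omega

lemma fcWord_sign {T : ℕ → ℤ} (hT : fcGood T) (a n : ℕ) : fcSign (fcWord T a n) := by
  intro x hx
  simp only [fcWord, List.mem_map, List.mem_range] at hx
  obtain ⟨j, _, rfl⟩ := hx
  have := hT (a + j)
  omega

section Crossings

variable {j1 j2 : ℤ} (hj1 : 0 ≤ j1) (hj12 : j1 < j2)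

lemma isNth0_iff {T : ℕ → ℤ} {a t1 t2 : ℕ} :
    IsNthCrossingAfter T a j1 j2 0 t1 t2 ↔
      (IsCrossing T t1 t2 j1 j2 ∧ a ≤ min t1 t2 ∧
        ∀ u1 u2, IsCrossing T u1 u2 j1 j2 → a ≤ min u1 u2 → min t1 t2 ≤ min u1 u2) :=
  Iff.rfl

/-- the endpoints of a crossing take values `j1`, `j2` -/
lemma cross_val_min {T : ℕ → ℤ} {t1 t2 : ℕ} (h : IsCrossing T t1 t2 j1 j2) :
    (T (min t1 t2) = j1 ∧ T (max t1 t2) = j2) ∨ (T (min t1 t2) = j2 ∧ T (max t1 t2) = j1) := by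
  rcases le_total t1 t2 with hc | hc
  · left; rw [min_eq_left hc, max_eq_right hc]; exact ⟨h.2.1, h.2.2.1⟩
  · right; rw [min_eq_right hc, max_eq_left hc]; exact ⟨h.2.2.1, h.2.1⟩

lemma cross_min_lt_max {T : ℕ → ℤ} {t1 t2 : ℕ} (h : IsCrossing T t1 t2 j1 j2) :
    min t1 t2 < max t1 t2 := by
  rcases eq_or_ne t1 t2 with rfl | hne
  · exact absurd (h.2.1.symm.trans h.2.2.1) h.1
  · exact min_lt_max.2 hne

include hj12 in
/-- words produce the first crossing -/
lemma isNth_of_words {T : ℕ → ℤ} (hT0 : T 0 = 0) {u L : List ℤ}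
    (hu : fcU j1 j2 u) (hL : fcAdm (j2 - j1) L) (hr : fcRuns T 0 (u ++ L)) :
    IsNthCrossingAfter T 0 j1 j2 0 u.length (u.length + L.length) := by
  obtain ⟨hru, hrL⟩ := fcRuns_append.1 hr
  have hvalu : ∀ k ≤ u.length, T k = fcPS u k := by
    intro k hk
    have := fcRuns_val hru k hk
    simpa [hT0] using this
  have hvalL : ∀ m ≤ L.length, T (u.length + m) = j1 + fcPS L m := by
    intro m hm
    have := fcRuns_val hrL m hm
    have h0 : T (0 + u.length) = j1 := by
      rw [zero_add, hvalu u.length le_rfl, fcPS_length, hu.2.1]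
    rw [zero_add] at h0 this
    rw [this, h0]
  have hLlen : 0 < L.length := List.length_pos_iff.2 hL.2.1
  have hT1 : T u.length = j1 := by simpa [fcPS_zero] using hvalL 0 (Nat.zero_le _)
  have hT2 : T (u.length + L.length) = j2 := by
    have := hvalL L.length le_rfl
    rw [fcPS_length, hL.2.2.1] at this
    omega
  have hminmax : min u.length (u.length + L.length) = u.length ∧
      max u.length (u.length + L.length) = u.length + L.length := by
    constructor <;> omega
  have hcross : IsCrossing T u.length (u.length + L.length) j1 j2 := by
    refine ⟨hj12.ne, hT1, hT2, fun t ht1 ht2 => ?_⟩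
    rw [hminmax.1] at ht1; rw [hminmax.2] at ht2
    have hm : t - u.length < L.length := by omega
    have hmp : 0 < t - u.length := by omega
    have := hvalL (t - u.length) hm.le
    rw [show u.length + (t - u.length) = t by omega] at this
    have hb := hL.2.2.2 (t - u.length) hmp hm
    rw [min_eq_left hj12.le, max_eq_right hj12.le, this]
    omega
  rw [isNth0_iff]
  refine ⟨hcross, Nat.zero_le _, fun u1 u2 hc _ => ?_⟩
  rw [hminmax.1]
  by_contra hlt
  push_neg at hlt
  have hmu : min u1 u2 < u.length := hlt
  have hTm : T (min u1 u2) = fcPS u (min u1 u2) := hvalu _ hmu.le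
  have hmlt : fcPS u (min u1 u2) < j2 := hu.2.2 _ hmu.le
  rcases cross_val_min hc with ⟨hv1, hv2⟩ | ⟨hv1, hv2⟩
  · -- T m = j1, T (max) = j2
    have hMgt : u.length < max u1 u2 := by
      by_contra hM
      push_neg at hM
      have hA := hvalu (max u1 u2) hM
      have hB := hu.2.2 (max u1 u2) hM
      omega
    have := hc.2.2.2 u.length hmu hMgt
    rw [min_eq_left hj12.le, hT1] at this
    omega
  · omega

include hj12 in
/-- uniqueness of the first crossing -/
lemma cross_max_eq {T : ℕ → ℤ} {a1 a2 b1 b2 : ℕ} (hA : IsCrossing T a1 a2 j1 j2)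
    (hB : IsCrossing T b1 b2 j1 j2) (hmin : min a1 a2 = min b1 b2) :
    max a1 a2 = max b1 b2 := by
  have key : ∀ {c1 c2 e1 e2 : ℕ}, IsCrossing T c1 c2 j1 j2 → IsCrossing T e1 e2 j1 j2 →
      min c1 c2 = min e1 e2 → max c1 c2 < max e1 e2 → False := by
    intro c1 c2 e1 e2 hC hE hm hlt
    have h1 : min e1 e2 < max c1 c2 := hm ▸ cross_min_lt_max hC
    have h2 := hE.2.2.2 (max c1 c2) h1 hlt
    rw [min_eq_left hj12.le, max_eq_right hj12.le] at h2
    rcases cross_val_min hC with ⟨_, hv⟩ | ⟨_, hv⟩ <;> omega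
  rcases lt_trichotomy (max a1 a2) (max b1 b2) with h | h | h
  · exact absurd (key hA hB hmin h) not_false
  · exact h
  · exact absurd (key hB hA hmin.symm h) not_false

include hj1 hj12 in
/-- the first crossing yields words in `fcU` and `fcAdm`. -/
lemma words_of_isNth {T : ℕ → ℤ} (hg : fcGood T) (hT0 : T 0 = 0) {σ1 σ2 : ℕ}
    (h12 : σ1 < σ2) (hN : IsNthCrossingAfter T 0 j1 j2 0 σ1 σ2) :
    fcU j1 j2 (fcWord T 0 σ1) ∧ fcAdm (j2 - j1) (fcWord T σ1 (σ2 - σ1)) := by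
  rw [isNth0_iff] at hN
  obtain ⟨hcross, -, hminimal⟩ := hN
  have hT1 : T σ1 = j1 := hcross.2.1
  have hT2 : T σ2 = j2 := hcross.2.2.1
  have hmin : min σ1 σ2 = σ1 := min_eq_left h12.le
  have hmax : max σ1 σ2 = σ2 := max_eq_right h12.le
  -- no value ≥ j2 before σ1
  have hbelow : ∀ k ≤ σ1, T k < j2 := by
    intro k hk
    by_contra hge
    push_neg at hge
    have hex : ∃ t, T t = j2 := by
      obtain ⟨t, _, _, ht⟩ := fcIvt_up hg (Nat.zero_le k) (by omega) hge
      exact ⟨t, ht⟩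
    set u2 := Nat.find hex with hu2def
    have hu2 : T u2 = j2 := Nat.find_spec hex
    have hu2min : ∀ s < u2, T s ≠ j2 := fun s hs => Nat.find_min hex hs
    have hu2le : u2 ≤ σ1 := by
      obtain ⟨t, _, htk, ht⟩ := fcIvt_up hg (Nat.zero_le k) (by omega) hge
      exact le_trans (Nat.find_min' hex ht) (htk.trans hk)
    have hu2pos : 0 < u2 := by
      rcases Nat.eq_zero_or_pos u2 with h0 | h0
      · rw [h0] at hu2; omega
      · exact h0
    have hlt2 : ∀ s < u2, T s < j2 := by
      intro s hs
      by_contra hge2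
      push_neg at hge2
      obtain ⟨t, _, hts, ht⟩ := fcIvt_up hg (Nat.zero_le s) (by omega) hge2
      exact hu2min t (lt_of_le_of_lt hts hs) ht
    have hexj1 : ∃ t ≤ u2 - 1, T t = j1 := by
      obtain ⟨t, _, htu, ht⟩ := fcIvt_up hg (Nat.zero_le u2) (c := j1) (by omega) (by omega)
      refine ⟨t, ?_, ht⟩
      have : t ≠ u2 := fun he => by rw [he, hu2] at ht; omega
      omega
    obtain ⟨t0, ht0le, ht0⟩ := hexj1
    set u1 := Nat.findGreatest (fun t => T t = j1) (u2 - 1) with hu1def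
    have hu1 : T u1 = j1 := Nat.findGreatest_spec (P := fun t => T t = j1) ht0le ht0
    have hu1le : u1 ≤ u2 - 1 := Nat.findGreatest_le _
    have hu1lt : u1 < u2 := by omega
    have hu1max : ∀ s, u1 < s → s ≤ u2 - 1 → T s ≠ j1 := fun s hs hs' =>
      Nat.findGreatest_is_greatest (P := fun t => T t = j1) hs hs'
    have hcross' : IsCrossing T u1 u2 j1 j2 := by
      refine ⟨hj12.ne, hu1, hu2, fun t ht1 ht2 => ?_⟩
      rw [min_eq_left hu1lt.le] at ht1
      rw [max_eq_right hu1lt.le] at ht2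
      rw [min_eq_left hj12.le, max_eq_right hj12.le]
      constructor
      · -- j1 < T t
        by_contra hle
        push_neg at hle
        obtain ⟨t', htt', ht'u, ht'⟩ := fcIvt_up hg ht2.le hle (by omega)
        have : t' ≠ u2 := fun he => by rw [he, hu2] at ht'; omega
        exact hu1max t' (lt_of_lt_of_le ht1 htt') (by omega) ht'
      · exact hlt2 t ht2
    have := hminimal u1 u2 hcross' (Nat.zero_le _)
    rw [hmin, min_eq_left hu1lt.le] at this
    omega
  constructor
  · refine ⟨fcWord_sign hg 0 σ1, ?_, fun k hk => ?_⟩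
    · have := fcRuns_val (fcRuns_fcWord T 0 σ1) σ1 (by simp)
      rw [← fcPS_length]
      simp only [fcWord_length] at this ⊢
      rw [zero_add] at this
      omega
    · have := fcRuns_val (fcRuns_fcWord T 0 σ1) k (by simpa using hk)
      rw [zero_add] at this
      rw [fcWord_length] at hk
      have := hbelow k hk
      omega
  · refine ⟨fcWord_sign hg σ1 (σ2 - σ1), ?_, ?_, fun k hkpos hk => ?_⟩
    · simp only [ne_eq, ← List.length_eq_zero_iff]
      rw [fcWord_length]; omega
    · have := fcRuns_val (fcRuns_fcWord T σ1 (σ2 - σ1)) (σ2 - σ1) (by simp)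
      rw [← fcPS_length]
      simp only [fcWord_length] at this ⊢
      rw [show σ1 + (σ2 - σ1) = σ2 by omega] at this
      omega
    · rw [fcWord_length] at hk
      have hval := fcRuns_val (fcRuns_fcWord T σ1 (σ2 - σ1)) k (by simpa using hk.le)
      have hbet := hcross.2.2.2 (σ1 + k) (by omega) (by omega)
      rw [min_eq_left hj12.le, max_eq_right hj12.le] at hbet
      omega

end Crossings

section HitReturn

lemma words_of_E {T : ℕ → ℤ} {d : ℤ} (hd : 0 < d) (hg : fcGood T) (hT0 : T 0 = 0)
    (hhit : ∃ t, T t = d) (hE : firstHit T d < firstReturn T) :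
    fcAdm d (fcWord T 0 (firstHit T d)) ∧
      fcV d (fcWord T (firstHit T d) (firstReturn T - firstHit T d)) := by
  set h := firstHit T d with hh
  set r := firstReturn T with hr
  have hA : {t : ℕ | T t = d}.Nonempty := hhit
  have hTh : T h = d := Nat.sInf_mem hA
  have hmin : ∀ k < h, T k ≠ d := fun k hk => Nat.notMem_of_lt_sInf hk
  have hBne : {t : ℕ | 0 < t ∧ T t = 0}.Nonempty := by
    by_contra hB
    rw [Set.not_nonempty_iff_eq_empty] at hB
    rw [hr, firstReturn, hB, Nat.sInf_empty] at hE
    omega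
  obtain ⟨hrpos, hTr⟩ : 0 < r ∧ T r = 0 := Nat.sInf_mem hBne
  have hrmin : ∀ k, 0 < k → k < r → T k ≠ 0 := by
    intro k h1 h2 h3
    exact Nat.notMem_of_lt_sInf (s := {t : ℕ | 0 < t ∧ T t = 0}) h2 ⟨h1, h3⟩
  have hhpos : 0 < h := by
    rcases Nat.eq_zero_or_pos h with h0 | h0
    · rw [h0] at hTh; omega
    · exact h0
  have hlt : ∀ k < h, T k < d := by
    intro k hk
    by_contra hge
    push_neg at hge
    obtain ⟨t, _, htk, ht⟩ := fcIvt_up hg (Nat.zero_le k) (c := d) (by omega) hge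
    exact hmin t (by omega) ht
  have hpos1 : ∀ k, 0 < k → k < h → 0 < T k := by
    intro k h1 h2
    have hne := hrmin k h1 (h2.trans hE)
    by_contra hle
    push_neg at hle
    obtain ⟨t, htk, hth, ht⟩ := fcIvt_up hg h2.le (c := 0) hle (by omega)
    exact hrmin t (by omega) (by omega) ht
  have hpos2 : ∀ m, h ≤ m → m < r → 0 < T m := by
    intro m h1 h2
    have hne := hrmin m (by omega) h2
    by_contra hle
    push_neg at hle
    obtain ⟨t, hth, htm, ht⟩ := fcIvt_down hg h1 (c := 0) (by omega) hle
    exact hrmin t (by omega) (by omega) ht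
  constructor
  · refine ⟨fcWord_sign hg 0 h, ?_, ?_, ?_⟩
    · rw [ne_eq, ← List.length_eq_zero_iff, fcWord_length]; omega
    · have := fcRuns_val (fcRuns_fcWord T 0 h) h (by simp)
      rw [← fcPS_length]
      simp only [fcWord_length] at this ⊢
      rw [zero_add] at this
      omega
    · intro k h1 h2
      rw [fcWord_length] at h2
      have hval := fcRuns_val (fcRuns_fcWord T 0 h) k (by simp; omega)
      rw [zero_add] at hval
      have := hpos1 k h1 h2
      have := hlt k h2
      omega
  · refine ⟨fcWord_sign hg h (r - h), ?_, ?_, ?_⟩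
    · rw [ne_eq, ← List.length_eq_zero_iff, fcWord_length]; omega
    · have := fcRuns_val (fcRuns_fcWord T h (r - h)) (r - h) (by simp)
      rw [← fcPS_length]
      simp only [fcWord_length] at this ⊢
      rw [show h + (r - h) = r by omega] at this
      omega
    · intro k hk
      rw [fcWord_length] at hk
      have hval := fcRuns_val (fcRuns_fcWord T h (r - h)) k (by simp; omega)
      have := hpos2 (h + k) (by omega) (by omega)
      omega

lemma hit_return_of_words {T : ℕ → ℤ} {d : ℤ} (hd : 0 < d) (hT0 : T 0 = 0) {L v : List ℤ}
    (hL : fcAdm d L) (hv : fcV d v) (hr : fcRuns T 0 (L ++ v)) :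
    firstHit T d = L.length ∧ firstReturn T = L.length + v.length := by
  obtain ⟨hrL, hrv⟩ := fcRuns_append.1 hr
  rw [zero_add] at hrv
  have hvalL : ∀ k ≤ L.length, T k = fcPS L k := fun k hk => by
    simpa [hT0] using fcRuns_val hrL k hk
  have hTd : T L.length = d := by rw [hvalL _ le_rfl, fcPS_length, hL.2.2.1]
  have hvalv : ∀ m ≤ v.length, T (L.length + m) = d + fcPS v m := by
    intro m hm
    have := fcRuns_val hrv m hm
    rw [this, hTd]
  have hLpos : 0 < L.length := List.length_pos_iff.2 hL.2.1
  have hvpos : 0 < v.length := List.length_pos_iff.2 hv.2.1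
  have hend : T (L.length + v.length) = 0 := by
    have := hvalv v.length le_rfl
    rw [fcPS_length, hv.2.2.1] at this
    omega
  have hlth : ∀ k < L.length, T k ≠ d := by
    intro k hk
    rcases Nat.eq_zero_or_pos k with rfl | hkpos
    · rw [hT0]; omega
    · have := (hL.2.2.2 k hkpos hk).2
      rw [hvalL k hk.le]; omega
  have h1 : firstHit T d = L.length := by
    rw [firstHit]
    apply le_antisymm
    · exact Nat.sInf_le hTd
    · by_contra hc
      push_neg at hc
      have hmem := Nat.sInf_mem (⟨L.length, hTd⟩ : {t : ℕ | T t = d}.Nonempty)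
      exact hlth _ hc hmem
  have hnz : ∀ k, 0 < k → k < L.length + v.length → T k ≠ 0 := by
    intro k hk1 hk2
    rcases lt_trichotomy k L.length with hk | hk | hk
    · have := (hL.2.2.2 k hk1 hk).1
      rw [hvalL k hk.le]; omega
    · rw [hk, hTd]; omega
    · have hm : k - L.length < v.length := by omega
      have h3 := hv.2.2.2 (k - L.length) hm
      have h4 := hvalv (k - L.length) hm.le
      rw [show L.length + (k - L.length) = k by omega] at h4
      omega
  have h2 : firstReturn T = L.length + v.length := by
    rw [firstReturn]
    apply le_antisymm
    · exact Nat.sInf_le ⟨by omega, hend⟩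
    · by_contra hc
      push_neg at hc
      have hmem := Nat.sInf_mem
        (⟨L.length + v.length, by constructor <;> omega⟩ : {t : ℕ | 0 < t ∧ T t = 0}.Nonempty)
      exact hnz _ hmem.1 hc hmem.2
  exact ⟨h1, h2⟩

end HitReturn

section Prob
set_option linter.unusedSectionVars false

open scoped ENNReal

variable {Ω : Type*} [MeasurableSpace Ω] (P : Measure Ω) [IsProbabilityMeasure P]
  (S : Ω → ℕ → ℤ)

/-- the cylinder event that the increments on `[a, a + w.length)` follow `w` -/
def fcAtom (a : ℕ) (w : List ℤ) : Set Ω := {ω | fcWord (S ω) a w.length = w}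

lemma fcAtom_mem {a : ℕ} {w : List ℤ} {ω : Ω} : ω ∈ fcAtom S a w ↔ fcRuns (S ω) a w :=
  fcWord_eq_iff

lemma fcAtom_eq_iInter (a : ℕ) (w : List ℤ) :
    fcAtom S a w = ⋂ i ∈ Finset.Ico a (a + w.length),
      (fun ω => S ω (i + 1) - S ω i) ⁻¹' {w.getD (i - a) 0} := by
  ext ω
  simp only [fcAtom, Set.mem_setOf_eq, Set.mem_iInter, Set.mem_preimage, Set.mem_singleton_iff,
    Finset.mem_Ico, fcWord_eq_iff (T := S ω), fcRuns]
  constructor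
  · rintro h i ⟨h1, h2⟩
    have := h (i - a) (by omega)
    rw [show a + (i - a) = i by omega] at this
    exact this
  · intro h j hj
    have := h (a + j) ⟨by omega, by omega⟩
    rw [show a + j - a = j by omega] at this
    exact this

variable (hSmeas : ∀ k : ℕ, Measurable fun ω => S ω k)
  (hSindep : iIndepFun (fun k ω => S ω (k + 1) - S ω k) P)
  (hSunif : ∀ k : ℕ, P {ω | S ω (k + 1) - S ω k = 1} = 1 / 2 ∧
      P {ω | S ω (k + 1) - S ω k = -1} = 1 / 2)

include hSmeas in
lemma fcAtom_meas (a : ℕ) (w : List ℤ) : MeasurableSet (fcAtom S a w) := by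
  rw [fcAtom_eq_iInter]
  exact MeasurableSet.biInter (Finset.countable_toSet _) fun i _ =>
    ((hSmeas (i + 1)).sub (hSmeas i)) (measurableSet_singleton _)

include hSindep hSunif in
lemma fcAtom_prob (a : ℕ) (w : List ℤ) (hw : fcSign w) :
    P (fcAtom S a w) = (1 / 2 : ℝ≥0∞) ^ w.length := by
  rw [fcAtom_eq_iInter]
  rw [hSindep.measure_inter_preimage_eq_mul (Finset.Ico a (a + w.length))
      (sets := fun i => {w.getD (i - a) 0}) (fun i _ => measurableSet_singleton _)]
  have key : ∀ i ∈ Finset.Ico a (a + w.length),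
      P ((fun ω => S ω (i + 1) - S ω i) ⁻¹' {w.getD (i - a) 0}) = 1 / 2 := by
    intro i hi
    rw [Finset.mem_Ico] at hi
    have hmem : w.getD (i - a) 0 ∈ w := by
      rw [List.getD_eq_getElem _ _ (by omega)]
      exact List.getElem_mem _
    rcases hw _ hmem with h | h <;> rw [h]
    · exact (hSunif i).1
    · exact (hSunif i).2
  rw [Finset.prod_congr rfl key, Finset.prod_const, Nat.card_Ico, Nat.add_sub_cancel_left]

include hSmeas hSunif in
lemma fcGood_ae : ∀ᵐ ω ∂P, fcGood (S ω) := by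
  rw [show (fun ω => fcGood (S ω)) = fun ω => ∀ k, S ω (k + 1) = S ω k + 1 ∨
      S ω (k + 1) = S ω k - 1 from rfl]
  rw [ae_all_iff]
  intro k
  set A := {ω | S ω (k + 1) - S ω k = 1} with hAdef
  set B := {ω | S ω (k + 1) - S ω k = -1} with hBdef
  have hA : MeasurableSet A := ((hSmeas (k + 1)).sub (hSmeas k)) (measurableSet_singleton 1)
  have hB : MeasurableSet B := ((hSmeas (k + 1)).sub (hSmeas k)) (measurableSet_singleton (-1))
  have hd : Disjoint A B := by
    rw [Set.disjoint_left]
    intro ω h1 h2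
    rw [hAdef, Set.mem_setOf_eq] at h1
    rw [hBdef, Set.mem_setOf_eq] at h2
    omega
  have hu : P (A ∪ B) = 1 := by
    rw [measure_union hd hB, (hSunif k).1, (hSunif k).2, ENNReal.add_halves]
  have hc : P (A ∪ B)ᶜ = 0 := by
    rw [measure_compl (hA.union hB) (measure_ne_top P _), measure_univ, hu, tsub_self]
  rw [ae_iff]
  apply measure_mono_null _ hc
  intro ω hω
  simp only [Set.mem_setOf_eq] at hω
  simp only [Set.mem_compl_iff, Set.mem_union, hAdef, hBdef, Set.mem_setOf_eq]
  omega

include hSmeas in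
lemma fc_meas_sInf {p : Ω → ℕ → Prop} (hp : ∀ n, MeasurableSet {ω | p ω n}) :
    Measurable fun ω => sInf {t | p ω t} := by
  apply measurable_to_countable'
  intro n
  have key : ∀ ω : Ω, (sInf {t | p ω t} = n ↔
      ((p ω n ∧ ∀ m < n, ¬ p ω m) ∨ ((∀ t, ¬ p ω t) ∧ n = 0))) := by
    intro ω
    constructor
    · intro h
      rcases Set.eq_empty_or_nonempty {t | p ω t} with he | hne
      · right
        refine ⟨fun t ht => ?_, ?_⟩
        · exact Set.eq_empty_iff_forall_notMem.1 he t ht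
        · rw [← h, he, Nat.sInf_empty]
      · left
        refine ⟨h ▸ Nat.sInf_mem hne, fun m hm => Nat.notMem_of_lt_sInf (h ▸ hm)⟩
    · rintro (⟨hmem, hmin⟩ | ⟨hall, rfl⟩)
      · apply le_antisymm (Nat.sInf_le hmem)
        by_contra hcon
        push_neg at hcon
        exact hmin _ hcon (Nat.sInf_mem ⟨n, hmem⟩)
      · have he : {t | p ω t} = (∅ : Set ℕ) := Set.eq_empty_iff_forall_notMem.2 hall
        rw [he]
        exact Nat.sInf_empty
  have hset : (fun ω => sInf {t | p ω t}) ⁻¹' {n} =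
      (({ω | p ω n} ∩ ⋂ m, ⋂ _h : m < n, {ω | p ω m}ᶜ) ∪
        ((⋂ t, {ω | p ω t}ᶜ) ∩ {ω : Ω | n = 0})) := by
    ext ω
    simp only [Set.mem_preimage, Set.mem_singleton_iff, Set.mem_union, Set.mem_inter_iff,
      Set.mem_setOf_eq, Set.mem_iInter, Set.mem_compl_iff, key ω]
  rw [hset]
  have hn0 : MeasurableSet {ω : Ω | n = 0} := by
    by_cases h : n = 0 <;> simp [h]
  exact (((hp n).inter (MeasurableSet.iInter fun m => MeasurableSet.iInter fun _ =>
    (hp m).compl)).union ((MeasurableSet.iInter fun t => (hp t).compl).inter hn0))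

include hSmeas in
lemma fc_meas_firstHit (x : ℤ) : Measurable fun ω => firstHit (S ω) x := by
  have : (fun ω => firstHit (S ω) x) = fun ω => sInf {t | S ω t = x} := rfl
  rw [this]
  exact fc_meas_sInf S hSmeas fun n => (hSmeas n) (measurableSet_singleton x)

include hSmeas in
lemma fc_meas_firstReturn : Measurable fun ω => firstReturn (S ω) := by
  have : (fun ω => firstReturn (S ω)) = fun ω => sInf {t | 0 < t ∧ S ω t = 0} := rfl
  rw [this]
  apply fc_meas_sInf S hSmeas
  intro n
  by_cases h : 0 < n
  · have : {ω : Ω | 0 < n ∧ S ω n = 0} = {ω | S ω n = 0} := by ext ω; simp [h]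
    rw [this]
    exact (hSmeas n) (measurableSet_singleton 0)
  · have : {ω : Ω | 0 < n ∧ S ω n = 0} = ∅ := by ext ω; simp [h]
    rw [this]
    exact MeasurableSet.empty

end Prob

open scoped ENNReal

/-- Fact e.3: the law of the increments of `S` along the first crossing of `(j1, j2)`
(with `0 ≤ j1 < j2`, `d := j2 - j1`) equals the law of the increments
`(ΔS 0, ..., ΔS (κ_d - 1))` conditioned on the event `{κ_d < κ_0}`. -/
theorem first_crossing_increments_law
    {Ω : Type*} [MeasurableSpace Ω] (P : Measure Ω) [IsProbabilityMeasure P]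
    (S : Ω → ℕ → ℤ)
    (hS0 : ∀ ω, S ω 0 = 0)
    (hSmeas : ∀ k : ℕ, Measurable fun ω => S ω k)
    (hSindep : iIndepFun (fun k ω => S ω (k + 1) - S ω k) P)
    (hSunif : ∀ k : ℕ, P {ω | S ω (k + 1) - S ω k = 1} = 1 / 2 ∧
      P {ω | S ω (k + 1) - S ω k = -1} = 1 / 2)
    (j1 j2 : ℤ) (hj1 : 0 ≤ j1) (hj12 : j1 < j2)
    (s1 s2 : Ω → ℕ) (hs1 : Measurable s1) (hs2 : Measurable s2)
    (hfirst : ∀ᵐ ω ∂P, s1 ω < s2 ω ∧ IsNthCrossingAfter (S ω) 0 j1 j2 0 (s1 ω) (s2 ω)) :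
    ∀ L : List ℤ,
      P {ω | ((List.range (s2 ω - s1 ω)).map fun j =>
          S ω (s1 ω + j + 1) - S ω (s1 ω + j)) = L} =
        ProbabilityTheory.cond P {ω | firstHit (S ω) (j2 - j1) < firstReturn (S ω)}
          {ω | ((List.range (firstHit (S ω) (j2 - j1))).map fun j =>
            S ω (j + 1) - S ω j) = L} := by
  classical
  intro L
  set d : ℤ := j2 - j1 with hd_def
  have hd : 0 < d := by omega
  set q : ℝ≥0∞ := 1 / 2 with hq_def
  have hq0 : q ≠ 0 := by rw [hq_def]; simp
  have hqpow : ∀ m : ℕ, q ^ m ≠ 0 := fun m => pow_ne_zero m hq0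
  -- the two events in the statement
  set E : Set Ω := {ω | firstHit (S ω) d < firstReturn (S ω)} with hE_def
  have hEmeas : MeasurableSet E :=
    measurableSet_lt (fc_meas_firstHit S hSmeas d) (fc_meas_firstReturn S hSmeas)
  have hGset : {ω | ((List.range (s2 ω - s1 ω)).map fun j =>
      S ω (s1 ω + j + 1) - S ω (s1 ω + j)) = L} =
      {ω | fcWord (S ω) (s1 ω) (s2 ω - s1 ω) = L} := rfl
  have hFset : {ω | ((List.range (firstHit (S ω) d)).map fun j =>
      S ω (j + 1) - S ω j) = L} = {ω | fcWord (S ω) 0 (firstHit (S ω) d) = L} := by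
    ext ω
    simp only [Set.mem_setOf_eq, fcWord, Nat.zero_add]
  rw [hGset, hFset]
  set F : Set Ω := {ω | fcWord (S ω) 0 (firstHit (S ω) d) = L} with hF_def
  set G : Set Ω := {ω | fcWord (S ω) (s1 ω) (s2 ω - s1 ω) = L} with hG_def
  -- a.e. facts
  have hae : ∀ᵐ ω ∂P, fcGood (S ω) ∧ s1 ω < s2 ω ∧
      IsNthCrossingAfter (S ω) 0 j1 j2 0 (s1 ω) (s2 ω) := by
    filter_upwards [fcGood_ae P S hSmeas hSunif, hfirst] with ω h1 h2
    exact ⟨h1, h2.1, h2.2⟩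
  have hhit : ∀ ω, IsNthCrossingAfter (S ω) 0 j1 j2 0 (s1 ω) (s2 ω) → fcGood (S ω) →
      ∃ t, S ω t = d := by
    intro ω hN hg
    have h2 : S ω (s2 ω) = j2 := (isNth0_iff.1 hN).1.2.2.1
    obtain ⟨t, _, _, ht⟩ := fcIvt_up hg (Nat.zero_le (s2 ω)) (c := d)
      (by rw [hS0 ω]; omega) (by omega)
    exact ⟨t, ht⟩
  -- uniqueness of the first crossing
  have cross_unique : ∀ {T : ℕ → ℤ} {t1 t2 t1' t2' : ℕ}, t1 < t2 → t1' < t2' →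
      IsNthCrossingAfter T 0 j1 j2 0 t1 t2 → IsNthCrossingAfter T 0 j1 j2 0 t1' t2' →
      t1 = t1' ∧ t2 = t2' := by
    intro T t1 t2 t1' t2' h h' hA hB
    rw [isNth0_iff] at hA hB
    have m1 := hA.2.2 _ _ hB.1 (Nat.zero_le _)
    have m2 := hB.2.2 _ _ hA.1 (Nat.zero_le _)
    have hmin : min t1 t2 = min t1' t2' := le_antisymm m1 m2
    have hmax := cross_max_eq hj12 hA.1 hB.1 hmin
    rw [min_eq_left h.le, min_eq_left h'.le] at hmin
    rw [max_eq_right h.le, max_eq_right h'.le] at hmax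
    exact ⟨hmin, hmax⟩
  have cross_atom : ∀ (u L' : List ℤ), fcU j1 j2 u → fcAdm d L' → ∀ ω : Ω,
      ω ∈ fcAtom S 0 (u ++ L') →
      IsNthCrossingAfter (S ω) 0 j1 j2 0 u.length (u.length + L'.length) := by
    intro u L' hu hL' ω hω
    exact isNth_of_words hj12 (hS0 ω) hu hL' ((fcAtom_mem S).1 hω)
  have atom_cross_eq : ∀ (u L1 u' L1' : List ℤ), fcU j1 j2 u → fcAdm d L1 →
      fcU j1 j2 u' → fcAdm d L1' → ∀ ω : Ω, ω ∈ fcAtom S 0 (u ++ L1) →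
      ω ∈ fcAtom S 0 (u' ++ L1') → u = u' ∧ L1 = L1' := by
    intro u L1 u' L1' hu hL1 hu' hL1' ω h1 h2
    have hN1 := cross_atom u L1 hu hL1 ω h1
    have hN2 := cross_atom u' L1' hu' hL1' ω h2
    have hl1 : 0 < L1.length := List.length_pos_iff.2 hL1.2.1
    have hl1' : 0 < L1'.length := List.length_pos_iff.2 hL1'.2.1
    obtain ⟨e1, e2⟩ := cross_unique (by omega) (by omega) hN1 hN2
    have hw : u ++ L1 = u' ++ L1' := fcRuns_unique ((fcAtom_mem S).1 h1) ((fcAtom_mem S).1 h2)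
      (by simp only [List.length_append]; omega)
    obtain ⟨e3, e4⟩ := List.append_inj hw e1
    exact ⟨e3, e4⟩
  have atom_E_eq : ∀ (L1 v L1' v' : List ℤ), fcAdm d L1 → fcV d v →
      fcAdm d L1' → fcV d v' → ∀ ω : Ω, ω ∈ fcAtom S 0 (L1 ++ v) →
      ω ∈ fcAtom S 0 (L1' ++ v') → L1 = L1' ∧ v = v' := by
    intro L1 v L1' v' hL1 hv hL1' hv' ω h1 h2
    obtain ⟨e1, e2⟩ := hit_return_of_words hd (hS0 ω) hL1 hv ((fcAtom_mem S).1 h1)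
    obtain ⟨e1', e2'⟩ := hit_return_of_words hd (hS0 ω) hL1' hv' ((fcAtom_mem S).1 h2)
    have hw : L1 ++ v = L1' ++ v' := fcRuns_unique ((fcAtom_mem S).1 h1) ((fcAtom_mem S).1 h2)
      (by simp only [List.length_append]; omega)
    exact List.append_inj hw (by omega)
  -- the three basic series
  set γ : ℝ≥0∞ := ∑' u : {u : List ℤ // fcU j1 j2 u}, (1 / 2 : ℝ≥0∞) ^ (u : List ℤ).length
    with hγ_def
  set α : ℝ≥0∞ := ∑' w : {w : List ℤ // fcAdm d w}, (1 / 2 : ℝ≥0∞) ^ (w : List ℤ).length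
    with hα_def
  set β : ℝ≥0∞ := ∑' v : {v : List ℤ // fcV d v}, (1 / 2 : ℝ≥0∞) ^ (v : List ℤ).length
    with hβ_def
  have hqpow : ∀ m : ℕ, (1 / 2 : ℝ≥0∞) ^ m ≠ 0 := fun m => pow_ne_zero m (by simp)
  -- replicate elements give positivity
  have hdn : (d.toNat : ℤ) = d := Int.toNat_of_nonneg hd.le
  have hdn0 : 0 < d.toNat := by omega
  have hrepAdm : fcAdm d (List.replicate d.toNat 1) := by
    refine ⟨fun x hx => Or.inl (List.eq_of_mem_replicate hx), ?_, ?_, ?_⟩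
    · rw [ne_eq, ← List.length_eq_zero_iff, List.length_replicate]; omega
    · rw [List.sum_replicate, nsmul_eq_mul, mul_one]; omega
    · intro k h1 h2
      rw [List.length_replicate] at h2
      have hps : fcPS (List.replicate d.toNat 1) k = k := by
        rw [fcPS, List.take_replicate, List.sum_replicate, nsmul_eq_mul, mul_one,
          min_eq_left h2.le]
      rw [hps]
      constructor <;> [omega; omega]
  have hrepV : fcV d (List.replicate d.toNat (-1)) := by
    refine ⟨fun x hx => Or.inr (List.eq_of_mem_replicate hx), ?_, ?_, ?_⟩
    · rw [ne_eq, ← List.length_eq_zero_iff, List.length_replicate]; omega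
    · rw [List.sum_replicate, nsmul_eq_mul, mul_neg_one]; omega
    · intro k hk
      rw [List.length_replicate] at hk
      have hps : fcPS (List.replicate d.toNat (-1)) k = -k := by
        rw [fcPS, List.take_replicate, List.sum_replicate, nsmul_eq_mul, mul_neg_one,
          min_eq_left hk.le]
      rw [hps]; omega
  have hα0 : α ≠ 0 := by
    intro h0
    have hle : (1 / 2 : ℝ≥0∞) ^ d.toNat ≤ α := by
      have := ENNReal.le_tsum (f := fun w : {w : List ℤ // fcAdm d w} =>
        (1 / 2 : ℝ≥0∞) ^ (w : List ℤ).length) ⟨List.replicate d.toNat 1, hrepAdm⟩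
      simpa [hα_def] using this
    rw [h0] at hle
    exact hqpow d.toNat (le_antisymm hle zero_le)
  have hβ0 : β ≠ 0 := by
    intro h0
    have hle : (1 / 2 : ℝ≥0∞) ^ d.toNat ≤ β := by
      have := ENNReal.le_tsum (f := fun v : {v : List ℤ // fcV d v} =>
        (1 / 2 : ℝ≥0∞) ^ (v : List ℤ).length) ⟨List.replicate d.toNat (-1), hrepV⟩
      simpa [hβ_def] using this
    rw [h0] at hle
    exact hqpow d.toNat (le_antisymm hle zero_le)
  -- normalization : γ * α = 1
  have hdisjUA : Pairwise (Function.onFun Disjoint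
      fun p : {u : List ℤ // fcU j1 j2 u} × {w : List ℤ // fcAdm d w} =>
        fcAtom S 0 (p.1.1 ++ p.2.1)) := by
    intro p p' hne
    rw [Function.onFun, Set.disjoint_left]
    intro ω h1 h2
    obtain ⟨e3, e4⟩ := atom_cross_eq p.1.1 p.2.1 p'.1.1 p'.2.1 p.1.2 p.2.2 p'.1.2 p'.2.2 ω h1 h2
    exact hne (Prod.ext (Subtype.ext e3) (Subtype.ext e4))
  have hone : γ * α = 1 := by
    have huniv : (Set.univ : Set Ω) =ᵐ[P] ⋃ p : {u : List ℤ // fcU j1 j2 u} ×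
        {w : List ℤ // fcAdm d w}, fcAtom S 0 (p.1.1 ++ p.2.1) := by
      rw [Filter.eventuallyEq_set]
      filter_upwards [hae] with ω hω
      obtain ⟨hg, hlt, hN⟩ := hω
      simp only [Set.mem_univ, true_iff]
      obtain ⟨hu, hadm⟩ := words_of_isNth hj1 hj12 hg (hS0 ω) hlt hN
      refine Set.mem_iUnion.2 ⟨(⟨fcWord (S ω) 0 (s1 ω), hu⟩,
        ⟨fcWord (S ω) (s1 ω) (s2 ω - s1 ω), hadm⟩), ?_⟩
      apply (fcAtom_mem S).2
      rw [fcRuns_append]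
      refine ⟨fcRuns_fcWord _ 0 _, ?_⟩
      rw [zero_add, fcWord_length]
      exact fcRuns_fcWord _ _ _
    have h1 : P (⋃ p : {u : List ℤ // fcU j1 j2 u} × {w : List ℤ // fcAdm d w},
        fcAtom S 0 (p.1.1 ++ p.2.1)) = γ * α := by
      rw [measure_iUnion hdisjUA (fun p => fcAtom_meas S hSmeas 0 _)]
      have hterm : ∀ p : {u : List ℤ // fcU j1 j2 u} × {w : List ℤ // fcAdm d w},
          P (fcAtom S 0 (p.1.1 ++ p.2.1)) =
            (1 / 2 : ℝ≥0∞) ^ p.1.1.length * (1 / 2 : ℝ≥0∞) ^ p.2.1.length := by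
        intro p
        rw [fcAtom_prob P S hSindep hSunif 0 _ (fcSign_append p.1.2.1 p.2.2.1),
          List.length_append, pow_add]
      rw [tsum_congr hterm, ENNReal.tsum_prod']
      have hinner : ∀ u : {u : List ℤ // fcU j1 j2 u},
          (∑' w : {w : List ℤ // fcAdm d w},
            (1 / 2 : ℝ≥0∞) ^ u.1.length * (1 / 2 : ℝ≥0∞) ^ w.1.length) =
          (1 / 2 : ℝ≥0∞) ^ u.1.length * α := fun u => ENNReal.tsum_mul_left
      rw [tsum_congr hinner, ENNReal.tsum_mul_right]
    rw [← h1, ← measure_congr huniv, measure_univ]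
  -- P E = α * β
  have hdisjAV : Pairwise (Function.onFun Disjoint
      fun p : {w : List ℤ // fcAdm d w} × {v : List ℤ // fcV d v} =>
        fcAtom S 0 (p.1.1 ++ p.2.1)) := by
    intro p p' hne
    rw [Function.onFun, Set.disjoint_left]
    intro ω h1 h2
    obtain ⟨e3, e4⟩ := atom_E_eq p.1.1 p.2.1 p'.1.1 p'.2.1 p.1.2 p.2.2 p'.1.2 p'.2.2 ω h1 h2
    exact hne (Prod.ext (Subtype.ext e3) (Subtype.ext e4))
  have hEae : E =ᵐ[P] ⋃ p : {w : List ℤ // fcAdm d w} × {v : List ℤ // fcV d v},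
      fcAtom S 0 (p.1.1 ++ p.2.1) := by
    rw [Filter.eventuallyEq_set]
    filter_upwards [hae] with ω hω
    obtain ⟨hg, hlt, hN⟩ := hω
    constructor
    · intro hEmem
      rw [hE_def, Set.mem_setOf_eq] at hEmem
      obtain ⟨hadm, hvv⟩ := words_of_E hd hg (hS0 ω) (hhit ω hN hg) hEmem
      refine Set.mem_iUnion.2 ⟨(⟨fcWord (S ω) 0 (firstHit (S ω) d), hadm⟩,
        ⟨fcWord (S ω) (firstHit (S ω) d) (firstReturn (S ω) - firstHit (S ω) d), hvv⟩), ?_⟩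
      apply (fcAtom_mem S).2
      rw [fcRuns_append]
      refine ⟨fcRuns_fcWord _ 0 _, ?_⟩
      rw [zero_add, fcWord_length]
      exact fcRuns_fcWord _ _ _
    · intro hmem
      obtain ⟨p, hω2⟩ := Set.mem_iUnion.1 hmem
      obtain ⟨e1, e2⟩ := hit_return_of_words hd (hS0 ω) p.1.2 p.2.2 ((fcAtom_mem S).1 hω2)
      rw [hE_def, Set.mem_setOf_eq, e1, e2]
      have := List.length_pos_iff.2 p.2.2.2.1
      omega
  have hPE : P E = α * β := by
    rw [measure_congr hEae, measure_iUnion hdisjAV (fun p => fcAtom_meas S hSmeas 0 _)]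
    have hterm : ∀ p : {w : List ℤ // fcAdm d w} × {v : List ℤ // fcV d v},
        P (fcAtom S 0 (p.1.1 ++ p.2.1)) =
          (1 / 2 : ℝ≥0∞) ^ p.1.1.length * (1 / 2 : ℝ≥0∞) ^ p.2.1.length := by
      intro p
      rw [fcAtom_prob P S hSindep hSunif 0 _ (fcSign_append p.1.2.1 p.2.2.1),
        List.length_append, pow_add]
    rw [tsum_congr hterm, ENNReal.tsum_prod']
    have hinner : ∀ w : {w : List ℤ // fcAdm d w},
        (∑' v : {v : List ℤ // fcV d v},
          (1 / 2 : ℝ≥0∞) ^ w.1.length * (1 / 2 : ℝ≥0∞) ^ v.1.length) =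
        (1 / 2 : ℝ≥0∞) ^ w.1.length * β := fun w => ENNReal.tsum_mul_left
    rw [tsum_congr hinner, ENNReal.tsum_mul_right]
  have hαβ1 : α * β ≤ 1 := hPE ▸ prob_le_one
  have hβtop : β ≠ ⊤ := by
    intro h
    rw [h, ENNReal.mul_top hα0] at hαβ1
    exact absurd hαβ1 (by simp)
  have hαtop : α ≠ ⊤ := by
    intro h
    rw [h, ENNReal.top_mul hβ0] at hαβ1
    exact absurd hαβ1 (by simp)
  have hγinv : γ = α⁻¹ := by
    calc γ = γ * (α * α⁻¹) := by rw [ENNReal.mul_inv_cancel hα0 hαtop, mul_one]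
      _ = γ * α * α⁻¹ := by rw [mul_assoc]
      _ = 1 * α⁻¹ := by rw [hone]
      _ = α⁻¹ := one_mul _
  by_cases hLadm : fcAdm d L
  · -- admissible case
    have hdisjU : Pairwise (Function.onFun Disjoint
        fun u : {u : List ℤ // fcU j1 j2 u} => fcAtom S 0 (u.1 ++ L)) := by
      intro u u' hne
      rw [Function.onFun, Set.disjoint_left]
      intro ω h1 h2
      obtain ⟨e3, -⟩ := atom_cross_eq u.1 L u'.1 L u.2 hLadm u'.2 hLadm ω h1 h2
      exact hne (Subtype.ext e3)
    have hdisjV : Pairwise (Function.onFun Disjoint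
        fun v : {v : List ℤ // fcV d v} => fcAtom S 0 (L ++ v.1)) := by
      intro v v' hne
      rw [Function.onFun, Set.disjoint_left]
      intro ω h1 h2
      obtain ⟨-, e4⟩ := atom_E_eq L v.1 L v'.1 hLadm v.2 hLadm v'.2 ω h1 h2
      exact hne (Subtype.ext e4)
    have hGae : G =ᵐ[P] ⋃ u : {u : List ℤ // fcU j1 j2 u}, fcAtom S 0 (u.1 ++ L) := by
      rw [Filter.eventuallyEq_set]
      filter_upwards [hae] with ω hω
      obtain ⟨hg, hlt, hN⟩ := hω
      constructor
      · intro hGmem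
        rw [hG_def, Set.mem_setOf_eq] at hGmem
        obtain ⟨hu, hadm⟩ := words_of_isNth hj1 hj12 hg (hS0 ω) hlt hN
        refine Set.mem_iUnion.2 ⟨⟨fcWord (S ω) 0 (s1 ω), hu⟩, ?_⟩
        apply (fcAtom_mem S).2
        rw [fcRuns_append]
        refine ⟨fcRuns_fcWord _ 0 _, ?_⟩
        have hlen : L.length = s2 ω - s1 ω := by rw [← hGmem, fcWord_length]
        rw [zero_add, fcWord_length]
        apply fcWord_eq_iff.1
        rw [hlen]
        exact hGmem
      · intro hmem
        obtain ⟨u, hω2⟩ := Set.mem_iUnion.1 hmem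
        have hN' := cross_atom u.1 L u.2 hLadm ω hω2
        have hl : 0 < L.length := List.length_pos_iff.2 hLadm.2.1
        obtain ⟨e1, e2⟩ := cross_unique hlt (by omega) hN hN'
        rw [hG_def, Set.mem_setOf_eq]
        have hruns := (fcRuns_append.1 ((fcAtom_mem S).1 hω2)).2
        rw [zero_add] at hruns
        rw [e1, e2, show u.1.length + L.length - u.1.length = L.length from by omega]
        exact fcWord_eq_of_runs hruns
    have hPG : P G = γ * (1 / 2 : ℝ≥0∞) ^ L.length := by
      rw [measure_congr hGae, measure_iUnion hdisjU (fun u => fcAtom_meas S hSmeas 0 _)]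
      have hterm : ∀ u : {u : List ℤ // fcU j1 j2 u},
          P (fcAtom S 0 (u.1 ++ L)) =
            (1 / 2 : ℝ≥0∞) ^ u.1.length * (1 / 2 : ℝ≥0∞) ^ L.length := by
        intro u
        rw [fcAtom_prob P S hSindep hSunif 0 _ (fcSign_append u.2.1 hLadm.1),
          List.length_append, pow_add]
      rw [tsum_congr hterm, ENNReal.tsum_mul_right]
    have hEFae : (E ∩ F : Set Ω) =ᵐ[P] ⋃ v : {v : List ℤ // fcV d v}, fcAtom S 0 (L ++ v.1) := by
      rw [Filter.eventuallyEq_set]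
      filter_upwards [hae] with ω hω
      obtain ⟨hg, hlt, hN⟩ := hω
      constructor
      · rintro ⟨hEmem, hFmem⟩
        rw [hE_def, Set.mem_setOf_eq] at hEmem
        rw [hF_def, Set.mem_setOf_eq] at hFmem
        obtain ⟨hadm, hvv⟩ := words_of_E hd hg (hS0 ω) (hhit ω hN hg) hEmem
        refine Set.mem_iUnion.2
          ⟨⟨fcWord (S ω) (firstHit (S ω) d) (firstReturn (S ω) - firstHit (S ω) d), hvv⟩, ?_⟩
        apply (fcAtom_mem S).2
        rw [fcRuns_append]
        have hlen : L.length = firstHit (S ω) d := by rw [← hFmem, fcWord_length]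
        constructor
        · apply fcWord_eq_iff.1
          rw [hlen]
          exact hFmem
        · rw [zero_add, hlen]
          exact fcRuns_fcWord _ _ _
      · intro hmem
        obtain ⟨v, hω2⟩ := Set.mem_iUnion.1 hmem
        obtain ⟨e1, e2⟩ := hit_return_of_words hd (hS0 ω) hLadm v.2 ((fcAtom_mem S).1 hω2)
        have hruns := (fcRuns_append.1 ((fcAtom_mem S).1 hω2)).1
        have hvl := List.length_pos_iff.2 v.2.2.1
        constructor
        · rw [hE_def, Set.mem_setOf_eq, e1, e2]
          omega
        · rw [hF_def, Set.mem_setOf_eq, e1]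
          exact fcWord_eq_of_runs hruns
    have hPEF : P (E ∩ F) = (1 / 2 : ℝ≥0∞) ^ L.length * β := by
      rw [measure_congr hEFae, measure_iUnion hdisjV (fun v => fcAtom_meas S hSmeas 0 _)]
      have hterm : ∀ v : {v : List ℤ // fcV d v},
          P (fcAtom S 0 (L ++ v.1)) =
            (1 / 2 : ℝ≥0∞) ^ L.length * (1 / 2 : ℝ≥0∞) ^ v.1.length := by
        intro v
        rw [fcAtom_prob P S hSindep hSunif 0 _ (fcSign_append hLadm.1 v.2.1),
          List.length_append, pow_add]
      rw [tsum_congr hterm, ENNReal.tsum_mul_left]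
    rw [cond_apply hEmeas P, hPG, hPEF, hPE, hγinv]
    have hββ : β⁻¹ * β = 1 := ENNReal.inv_mul_cancel hβ0 hβtop
    rw [ENNReal.mul_inv (Or.inl hα0) (Or.inl hαtop)]
    calc α⁻¹ * (1 / 2 : ℝ≥0∞) ^ L.length
        = α⁻¹ * (1 / 2 : ℝ≥0∞) ^ L.length * (β⁻¹ * β) := by rw [hββ, mul_one]
      _ = α⁻¹ * β⁻¹ * ((1 / 2 : ℝ≥0∞) ^ L.length * β) := by ring
  · -- non-admissible case : both sides are zero
    have hGnull : P G = 0 := by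
      have : G =ᵐ[P] (∅ : Set Ω) := by
        rw [Filter.eventuallyEq_set]
        filter_upwards [hae] with ω hω
        obtain ⟨hg, hlt, hN⟩ := hω
        simp only [Set.mem_empty_iff_false, iff_false]
        intro hGmem
        rw [hG_def, Set.mem_setOf_eq] at hGmem
        obtain ⟨-, hadm⟩ := words_of_isNth hj1 hj12 hg (hS0 ω) hlt hN
        rw [hGmem] at hadm
        exact hLadm hadm
      rw [measure_congr this, measure_empty]
    have hEFnull : P (E ∩ F) = 0 := by
      have : (E ∩ F : Set Ω) =ᵐ[P] (∅ : Set Ω) := by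
        rw [Filter.eventuallyEq_set]
        filter_upwards [hae] with ω hω
        obtain ⟨hg, hlt, hN⟩ := hω
        simp only [Set.mem_empty_iff_false, iff_false]
        rintro ⟨hEmem, hFmem⟩
        rw [hE_def, Set.mem_setOf_eq] at hEmem
        rw [hF_def, Set.mem_setOf_eq] at hFmem
        obtain ⟨hadm, -⟩ := words_of_E hd hg (hS0 ω) (hhit ω hN hg) hEmem
        rw [hFmem] at hadm
        exact hLadm hadm
      rw [measure_congr this, measure_empty]
    rw [cond_apply hEmeas P, hGnull, hEFnull, mul_zero]
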